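/- Under the assumptions of the previous identity, if additionally y'(0) = ỹ'(0) = 0 and y(b) = ỹ(b) = 0, then ∫_0^b [2λ(p − p̃) + (q − q̃)]·y·ỹ dx = 0. -/

import Mathlib

open MeasureTheory

theorem wronskian_orthogonality (b : ℝ) (hb : 0 < b) (lam : ℂ)
    (p pt q qt ρ : ℝ → ℝ)
    (hp : ContinuousOn p (Set.Icc 0 b)) (hpt : ContinuousOn pt (Set.Icc 0 b))
    (hq : ContinuousOn q (Set.Icc 0 b)) (hqt : ContinuousOn qt (Set.Icc 0 b))
    (hρ : ContinuousOn ρ (Set.Icc 0 b))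
    (y y' y'' yt yt' yt'' : ℝ → ℂ)
    (hy1 : ∀ x ∈ Set.Icc (0:ℝ) b, HasDerivWithinAt y (y' x) (Set.Icc 0 b) x)
    (hy2 : ∀ x ∈ Set.Icc (0:ℝ) b, HasDerivWithinAt y' (y'' x) (Set.Icc 0 b) x)
    (hyt1 : ∀ x ∈ Set.Icc (0:ℝ) b, HasDerivWithinAt yt (yt' x) (Set.Icc 0 b) x)
    (hyt2 : ∀ x ∈ Set.Icc (0:ℝ) b, HasDerivWithinAt yt' (yt'' x) (Set.Icc 0 b) x)
    (hode : ∀ x ∈ Set.Icc (0:ℝ) b,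
      -y'' x + (2 * lam * (p x : ℂ) + (q x : ℂ)) * y x = lam ^ 2 * (ρ x : ℂ) * y x)
    (hodet : ∀ x ∈ Set.Icc (0:ℝ) b,
      -yt'' x + (2 * lam * (pt x : ℂ) + (qt x : ℂ)) * yt x = lam ^ 2 * (ρ x : ℂ) * yt x)
    (hy0 : y' 0 = 0) (hyt0 : yt' 0 = 0) (hyb : y b = 0) (hytb : yt b = 0) :
    (∫ x in (0:ℝ)..b,
        (2 * lam * ((p x : ℂ) - (pt x : ℂ)) + ((q x : ℂ) - (qt x : ℂ))) * (y x * yt x)) = 0 := by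
  set W : ℝ → ℂ := fun x => yt' x * y x - y' x * yt x with hW
  set g : ℝ → ℂ := fun x => yt'' x * y x - y'' x * yt x with hg
  have hmem : Set.Icc (0:ℝ) 0 ⊆ Set.Icc 0 b := by
    intro x hx; exact ⟨hx.1, hx.2.trans hb.le⟩
  have hWd : ∀ x ∈ Set.Icc (0:ℝ) b, HasDerivWithinAt W (g x) (Set.Icc 0 b) x := by
    intro x hx
    have h := ((hyt2 x hx).mul (hy1 x hx)).sub ((hy2 x hx).mul (hyt1 x hx))
    convert h using 1
    · rfl
    · rfl
    · simp only [hg]; ring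
  -- continuity of components
  have hyc : ContinuousOn y (Set.Icc 0 b) := fun x hx => (hy1 x hx).continuousWithinAt
  have hytc : ContinuousOn yt (Set.Icc 0 b) := fun x hx => (hyt1 x hx).continuousWithinAt
  have hWc : ContinuousOn W (Set.Icc 0 b) := fun x hx => (hWd x hx).continuousWithinAt
  -- integrand equals -g on Icc
  have hkey : ∀ x ∈ Set.Icc (0:ℝ) b,
      (2 * lam * ((p x : ℂ) - (pt x : ℂ)) + ((q x : ℂ) - (qt x : ℂ))) * (y x * yt x) = -g x := by
    intro x hx
    have h1 := hode x hx
    have h2 := hodet x hx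
    simp only [hg]
    linear_combination yt x * h1 - y x * h2
  -- integrability of integrand
  have hcont : ContinuousOn (fun x =>
      (2 * lam * ((p x : ℂ) - (pt x : ℂ)) + ((q x : ℂ) - (qt x : ℂ))) * (y x * yt x))
      (Set.Icc 0 b) := by
    apply ContinuousOn.mul
    · apply ContinuousOn.add
      · exact continuousOn_const.mul
          ((Complex.continuous_ofReal.comp_continuousOn hp).sub
            (Complex.continuous_ofReal.comp_continuousOn hpt))
      · exact (Complex.continuous_ofReal.comp_continuousOn hq).sub
          (Complex.continuous_ofReal.comp_continuousOn hqt)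
    · exact hyc.mul hytc
  have hicc : Set.uIcc (0:ℝ) b = Set.Icc 0 b := Set.uIcc_of_le hb.le
  have hint : IntervalIntegrable (fun x =>
      (2 * lam * ((p x : ℂ) - (pt x : ℂ)) + ((q x : ℂ) - (qt x : ℂ))) * (y x * yt x))
      volume 0 b := by
    apply ContinuousOn.intervalIntegrable
    rwa [hicc]
  have hgint : IntervalIntegrable g volume 0 b := by
    apply ContinuousOn.intervalIntegrable
    rw [hicc]
    exact hcont.neg.congr fun x hx => by simp only [Pi.neg_apply]; rw [hkey x hx, neg_neg]
  have hFTC : ∫ x in (0:ℝ)..b, g x = W b - W 0 := by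
    apply intervalIntegral.integral_eq_sub_of_hasDeriv_right_of_le hb.le hWc _ hgint
    intro x hx
    have hx' : x ∈ Set.Icc (0:ℝ) b := Set.mem_Icc_of_Ioo hx
    apply (hWd x hx').mono_of_mem_nhdsWithin
    exact mem_nhdsWithin_of_mem_nhds (Icc_mem_nhds hx.1 hx.2)
  have heq : (∫ x in (0:ℝ)..b,
      (2 * lam * ((p x : ℂ) - (pt x : ℂ)) + ((q x : ℂ) - (qt x : ℂ))) * (y x * yt x))
      = ∫ x in (0:ℝ)..b, -g x := by
    apply intervalIntegral.integral_congr
    intro x hx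
    rw [hicc] at hx
    exact hkey x hx
  rw [heq, intervalIntegral.integral_neg, hFTC]
  simp [hW, hy0, hyt0, hyb, hytb]
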